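/- Suppose a non-stationary finite MDP satisfies: there exists J ∈ ℕ⁺ and η > 0 such that for any pair of policy sequences and any t, the J-step composed transition matrices P¹ = P_t^{π¹_t}···P_{t+J}^{π¹_{t+J}} and P² = P_t^{π²_t}···P_{t+J}^{π²_{t+J}} satisfy min_{s₁,s₂} sum_j min{P¹(j|s₁), P²(j|s₂)} >= η. Then the composed Bellman operator L_t ∘ ··· ∘ L_{t+J} is a span contraction with coefficient γ = 1 - η: sp(L_t∘···∘L_{t+J} u - L_t∘···∘L_{t+J} v) <= γ·sp(u - v) for all u, v ∈ R^{|S|}. -/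
import Mathlib


/-- The span semi-norm. -/
noncomputable def sp {S : Type*} [Fintype S] [Nonempty S] (v : S → ℝ) : ℝ :=
  (⨆ i, v i) - ⨅ i, v i

/-- The Bellman (optimality) operator of the non-stationary MDP at time `t`. -/
noncomputable def bell {S A : Type*} [Fintype S] [Fintype A] [Nonempty A]
    (r : ℕ → S → A → ℝ) (P : ℕ → S → A → S → ℝ) (t : ℕ) (v : S → ℝ) : S → ℝ :=
  fun s => ⨆ a, (r t s a + ∑ s', P t s a s' * v s')

/-- `bellComp r P t n v = L_t ∘ ⋯ ∘ L_{t+n} v`. -/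
noncomputable def bellComp {S A : Type*} [Fintype S] [Fintype A] [Nonempty A]
    (r : ℕ → S → A → ℝ) (P : ℕ → S → A → S → ℝ) : ℕ → ℕ → (S → ℝ) → S → ℝ
  | t, 0, v => bell r P t v
  | t, n + 1, v => bell r P t (bellComp r P (t + 1) n v)

/-- `polP P π t n = P_t^{π_t} ⋯ P_{t+n}^{π_{t+n}}`, the composed transition matrix. -/
noncomputable def polP {S A : Type*} [Fintype S]
    (P : ℕ → S → A → S → ℝ) (π : ℕ → S → A) : ℕ → ℕ → S → S → ℝ
  | t, 0 => fun s j => P t s (π t s) j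
  | t, n + 1 => fun s j => ∑ s', P t s (π t s) s' * polP P π (t + 1) n s' j

section Aux

variable {S A : Type*} [Fintype S] [Nonempty S] [Fintype A] [Nonempty A]
variable (r : ℕ → S → A → ℝ) (P : ℕ → S → A → S → ℝ)

lemma polP_nonneg (hP : ∀ t s a s', 0 ≤ P t s a s') (π : ℕ → S → A) :
    ∀ n t (s j : S), 0 ≤ polP P π t n s j := by
  intro n
  induction n with
  | zero => intro t s j; exact hP _ _ _ _
  | succ n ih =>
    intro t s j
    exact Finset.sum_nonneg fun s' _ => mul_nonneg (hP _ _ _ _) (ih _ _ _)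

/-- Each state has a "best" action (finite, nonempty action set). -/
noncomputable def greedy (W : ℕ → S → ℝ) : ℕ → S → A :=
  fun t s => Classical.choose
    (Finite.exists_max fun a : A => r t s a + ∑ s', P t s a s' * W t s')

lemma greedy_le (W : ℕ → S → ℝ) (t : ℕ) (s : S) (a : A) :
    r t s a + ∑ s', P t s a s' * W t s' ≤
      r t s (greedy r P W t s) + ∑ s', P t s (greedy r P W t s) s' * W t s' :=
  Classical.choose_spec
    (Finite.exists_max fun a : A => r t s a + ∑ s', P t s a s' * W t s') a

lemma le_bell (v : S → ℝ) (t : ℕ) (s : S) (a : A) :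
    r t s a + ∑ s', P t s a s' * v s' ≤ bell r P t v s := by
  exact le_ciSup (f := fun a : A => r t s a + ∑ s', P t s a s' * v s')
    (Set.Finite.bddAbove (Set.finite_range _)) a

lemma bell_eq (W : ℕ → S → ℝ) (t : ℕ) (s : S) :
    bell r P t (W t) s =
      r t s (greedy r P W t s) + ∑ s', P t s (greedy r P W t s) s' * W t s' :=
  le_antisymm (ciSup_le (greedy_le r P W t s)) (le_bell r P (W t) t s _)

/-- The downstream value functions of the chain ending at time `T` applied to `u`. -/
noncomputable def Wfun (u : S → ℝ) (T : ℕ) : ℕ → S → ℝ :=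
  fun m => if m < T then bellComp r P (m + 1) (T - m - 1) u else u

lemma bellComp_sub_le (hP : ∀ t s a s', 0 ≤ P t s a s') (u v : S → ℝ) (T : ℕ) :
    ∀ n t, t + n = T → ∀ s,
      bellComp r P t n u s - bellComp r P t n v s ≤
        ∑ j, polP P (greedy r P (Wfun r P u T)) t n s j * (u j - v j) := by
  set g := greedy r P (Wfun r P u T) with hg
  intro n
  induction n with
  | zero =>
    intro t ht s
    have hW : Wfun r P u T t = u := by simp [Wfun, show ¬ t < T by omega]
    have h1 : bellComp r P t 0 u s
        = r t s (g t s) + ∑ s', P t s (g t s) s' * u s' := by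
      have h := bell_eq r P (Wfun r P u T) t s
      rw [hW] at h
      exact h
    have h2 : r t s (g t s) + ∑ s', P t s (g t s) s' * v s' ≤ bellComp r P t 0 v s :=
      le_bell r P v t s (g t s)
    have hsum : ∑ j, polP P g t 0 s j * (u j - v j)
        = (∑ j, P t s (g t s) j * u j) - ∑ j, P t s (g t s) j * v j := by
      rw [← Finset.sum_sub_distrib]
      exact Finset.sum_congr rfl fun j _ => by simp [polP]; ring
    rw [hsum]
    linarith
  | succ n ih =>
    intro t ht s
    have hW : Wfun r P u T t = bellComp r P (t + 1) n u := by
      simp [Wfun, show t < T by omega, show T - t - 1 = n by omega]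
    have h1 : bellComp r P t (n + 1) u s
        = r t s (g t s) + ∑ s', P t s (g t s) s' * bellComp r P (t + 1) n u s' := by
      have h := bell_eq r P (Wfun r P u T) t s
      rw [hW] at h
      exact h
    have h2 : r t s (g t s) + ∑ s', P t s (g t s) s' * bellComp r P (t + 1) n v s' ≤
        bellComp r P t (n + 1) v s :=
      le_bell r P (bellComp r P (t + 1) n v) t s (g t s)
    have h3 : ∑ s', P t s (g t s) s' *
          (bellComp r P (t + 1) n u s' - bellComp r P (t + 1) n v s')
        ≤ ∑ s', P t s (g t s) s' * ∑ j, polP P g (t + 1) n s' j * (u j - v j) :=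
      Finset.sum_le_sum fun s' _ =>
        mul_le_mul_of_nonneg_left (ih (t + 1) (by omega) s') (hP _ _ _ _)
    have h4 : ∑ s', P t s (g t s) s' * ∑ j, polP P g (t + 1) n s' j * (u j - v j)
        = ∑ j, polP P g t (n + 1) s j * (u j - v j) := by
      simp only [polP, Finset.mul_sum, Finset.sum_mul]
      rw [Finset.sum_comm]
      exact Finset.sum_congr rfl fun j _ => Finset.sum_congr rfl fun s' _ => by ring
    have h5 : ∑ s', P t s (g t s) s' *
          (bellComp r P (t + 1) n u s' - bellComp r P (t + 1) n v s')
        = (∑ s', P t s (g t s) s' * bellComp r P (t + 1) n u s')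
          - ∑ s', P t s (g t s) s' * bellComp r P (t + 1) n v s' := by
      rw [← Finset.sum_sub_distrib]
      exact Finset.sum_congr rfl fun s' _ => by ring
    linarith
  
lemma sp_spec (w : S → ℝ) :
    ∃ M m : S, sp w = w M - w m ∧ (∀ i, w i ≤ w M) ∧ ∀ i, w m ≤ w i := by
  obtain ⟨M, hM⟩ := Finite.exists_max w
  obtain ⟨m, hm⟩ := Finite.exists_min w
  refine ⟨M, m, ?_, hM, hm⟩
  unfold sp
  rw [le_antisymm (ciSup_le hM) (le_ciSup (Set.Finite.bddAbove (Set.finite_range w)) M),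
      le_antisymm (ciInf_le (Set.Finite.bddBelow (Set.finite_range w)) m) (le_ciInf hm)]

lemma dobrushin (p q w : S → ℝ) (hp : ∀ j, 0 ≤ p j) (hq : ∀ j, 0 ≤ q j)
    (hps : ∑ j, p j = 1) (hqs : ∑ j, q j = 1) (η : ℝ)
    (hmin : η ≤ ∑ j, min (p j) (q j)) :
    (∑ j, p j * w j) - ∑ j, q j * w j ≤ (1 - η) * sp w := by
  obtain ⟨M, m, hsp, hM, hm⟩ := sp_spec w
  set c := ∑ j, min (p j) (q j) with hc
  have hA : ∑ j, p j * w j ≤ (1 - c) * w M + ∑ j, min (p j) (q j) * w j := by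
    have he : ∑ j, ((p j - min (p j) (q j)) * w M + min (p j) (q j) * w j)
        = (1 - c) * w M + ∑ j, min (p j) (q j) * w j := by
      rw [Finset.sum_add_distrib, ← Finset.sum_mul, Finset.sum_sub_distrib, hps, ← hc]
    rw [← he]
    refine Finset.sum_le_sum fun j _ => ?_
    nlinarith [mul_le_mul_of_nonneg_left (hM j)
      (sub_nonneg.2 (min_le_left (p j) (q j)))]
  have hB : (1 - c) * w m + ∑ j, min (p j) (q j) * w j ≤ ∑ j, q j * w j := by
    have he : ∑ j, ((q j - min (p j) (q j)) * w m + min (p j) (q j) * w j)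
        = (1 - c) * w m + ∑ j, min (p j) (q j) * w j := by
      rw [Finset.sum_add_distrib, ← Finset.sum_mul, Finset.sum_sub_distrib, hqs, ← hc]
    rw [← he]
    refine Finset.sum_le_sum fun j _ => ?_
    nlinarith [mul_le_mul_of_nonneg_left (hm j)
      (sub_nonneg.2 (min_le_right (p j) (q j)))]
  have hMm : w m ≤ w M := hm M
  have hlast : (1 - c) * w M - (1 - c) * w m ≤ (1 - η) * (w M - w m) := by
    nlinarith [mul_le_mul_of_nonneg_right (show 1 - c ≤ 1 - η by linarith)
      (sub_nonneg.2 hMm)]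
  rw [hsp]
  linarith

lemma polP_row (hrow : ∀ t s a, ∑ s', P t s a s' = 1) (π : ℕ → S → A) :
    ∀ n t (s : S), ∑ j, polP P π t n s j = 1 := by
  intro n
  induction n with
  | zero => intro t s; exact hrow _ _ _
  | succ n ih =>
    intro t s
    show ∑ j, ∑ s', P t s (π t s) s' * polP P π (t + 1) n s' j = 1
    rw [Finset.sum_comm]
    simp only [← Finset.mul_sum]
    simp only [fun s' => ih (t + 1) s', mul_one]
    exact hrow _ _ _

end Aux

/-- If all pairs of `J`-step composed transition matrices (for any pair of policy
sequences and any starting time) have Dobrushin overlap at least `η > 0`, then the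
composed Bellman operator `L_t ∘ ⋯ ∘ L_{t+J}` is a span contraction with
coefficient `γ = 1 - η`. -/
theorem J_stage_span_contraction {S A : Type*} [Fintype S] [Nonempty S]
    [Fintype A] [Nonempty A]
    (r : ℕ → S → A → ℝ) (P : ℕ → S → A → S → ℝ)
    (hr : ∀ t s a, r t s a ∈ Set.Icc (0 : ℝ) 1)
    (hP : ∀ t s a s', 0 ≤ P t s a s') (hrow : ∀ t s a, ∑ s', P t s a s' = 1)
    (J : ℕ) (hJ : 0 < J) (η : ℝ) (hη : 0 < η)
    (hoverlap : ∀ (π₁ π₂ : ℕ → S → A) (t : ℕ) (s₁ s₂ : S),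
      η ≤ ∑ j, min (polP P π₁ t J s₁ j) (polP P π₂ t J s₂ j)) :
    ∀ (t : ℕ) (u v : S → ℝ),
      sp (bellComp r P t J u - bellComp r P t J v) ≤ (1 - η) * sp (u - v) := by
  intro t u v
  set gu := greedy r P (Wfun r P u (t + J)) with hgu
  set gv := greedy r P (Wfun r P v (t + J)) with hgv
  obtain ⟨s₁, s₂, hsp, hM, hm⟩ :=
    sp_spec (bellComp r P t J u - bellComp r P t J v)
  have h1 := bellComp_sub_le r P hP u v (t + J) J t rfl s₁
  have h2 := bellComp_sub_le r P hP v u (t + J) J t rfl s₂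
  have hneg : ∑ j, polP P gv t J s₂ j * (v j - u j)
      = - ∑ j, polP P gv t J s₂ j * ((u - v) j) := by
    rw [← Finset.sum_neg_distrib]
    exact Finset.sum_congr rfl fun j _ => by simp [Pi.sub_apply]; ring
  have hd := dobrushin (polP P gu t J s₁) (polP P gv t J s₂) (u - v)
    (fun j => polP_nonneg P hP gu J t s₁ j) (fun j => polP_nonneg P hP gv J t s₂ j)
    (polP_row P hrow gu J t s₁) (polP_row P hrow gv J t s₂) η
    (hoverlap gu gv t s₁ s₂)
  simp only [Pi.sub_apply] at hsp hd h1 h2 hneg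
  rw [hsp]
  linarith
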